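/- Let T > 0, let α₁, α₂ ∈ (0,2] with α* := max{α₁,α₂} > 1, and let m ≥ 1 be an integer. Then ∫_{D^m_T} ∫_{ℝ^m} exp(-∑_{j=1}^m (|v_j|^{α₁} + |v_j|^{α₂}) s_j) dv_1 ⋯ dv_m ds_1 ⋯ ds_m ≤ ( T^{m(1 − 1/α*)} / Γ(m(1 − 1/α*) + 1) ) · ( Γ(1 − 1/α*) ∫_ℝ e^{-|v|^{α*}} dv )^m; in particular this iterated integral is finite. -/

import Mathlib

open MeasureTheory ENNReal

/-- The open simplex `D^m_T = {s ∈ ℝ^m : sⱼ > 0 for all j, s₁ + ⋯ + s_m < T}`. -/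
def simplexD (m : ℕ) (T : ℝ) : Set (Fin m → ℝ) :=
  {s | (∀ j, 0 < s j) ∧ ∑ j, s j < T}

lemma simplexD_empty {m : ℕ} {T : ℝ} (hT : T ≤ 0) : simplexD m T = ∅ := by
  ext s
  simp only [simplexD, Set.mem_setOf_eq, Set.mem_empty_iff_false, iff_false, not_and]
  intro hs hsum
  have h0 : (0:ℝ) ≤ ∑ j, s j := Finset.sum_nonneg fun j _ => (hs j).le
  linarith

lemma measurableSet_simplexD (m : ℕ) (T : ℝ) : MeasurableSet (simplexD m T) := by
  have h : simplexD m T = (⋂ j, {s : Fin m → ℝ | 0 < s j}) ∩ {s : Fin m → ℝ | ∑ j, s j < T} := by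
    ext s; simp [simplexD, Set.mem_iInter]
  rw [h]
  exact (MeasurableSet.iInter fun j =>
      measurableSet_lt measurable_const (measurable_pi_apply j)).inter
    (measurableSet_lt (Finset.measurable_sum _ fun j _ => measurable_pi_apply j) measurable_const)

lemma integrableOn_beta_kernel {u w T : ℝ} (hu : 0 < u) (hw : 0 ≤ w) (hT : 0 < T) :
    IntegrableOn (fun x : ℝ => x ^ (u - 1) * (T - x) ^ w) (Set.Ioo 0 T) := by
  have h1 : IntervalIntegrable (fun x : ℝ => x ^ (u - 1)) volume 0 T :=
    intervalIntegral.intervalIntegrable_rpow' (by linarith)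
  have h2 : ContinuousOn (fun x : ℝ => (T - x) ^ w) (Set.uIcc 0 T) :=
    ContinuousOn.rpow_const ((continuous_const.sub continuous_id).continuousOn)
      (fun x _ => Or.inr hw)
  have h3 := h1.mul_continuousOn h2
  rw [intervalIntegrable_iff_integrableOn_Ioc_of_le hT.le] at h3
  exact h3.mono_set Set.Ioo_subset_Ioc_self

lemma realBeta (u v : ℝ) (hu : 0 < u) (hv : 0 < v) {T : ℝ} (hT : 0 < T) :
    ∫ x in (0:ℝ)..T, x ^ (u - 1) * (T - x) ^ (v - 1) =
      T ^ (u + v - 1) * (Real.Gamma u * Real.Gamma v / Real.Gamma (u + v)) := by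
  have key : ((∫ x in (0:ℝ)..T, x ^ (u - 1) * (T - x) ^ (v - 1) : ℝ) : ℂ)
      = ((T ^ (u + v - 1) * (Real.Gamma u * Real.Gamma v / Real.Gamma (u + v)) : ℝ) : ℂ) := by
    rw [← intervalIntegral.integral_ofReal]
    have h1 : ∫ x in (0:ℝ)..T, ((x ^ (u - 1) * (T - x) ^ (v - 1) : ℝ) : ℂ)
        = ∫ x in (0:ℝ)..T, (x : ℂ) ^ ((u : ℂ) - 1) * ((T : ℂ) - x) ^ ((v : ℂ) - 1) := by
      refine intervalIntegral.integral_congr fun x hx => ?_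
      rw [Set.uIcc_of_le hT.le] at hx
      rw [Complex.ofReal_mul, Complex.ofReal_cpow hx.1,
        Complex.ofReal_cpow (by linarith [hx.2] : (0:ℝ) ≤ T - x)]
      push_cast
      ring
    rw [h1, Complex.betaIntegral_scaled u v hT]
    have hβ : Complex.betaIntegral u v
        = Complex.Gamma u * Complex.Gamma v / Complex.Gamma (u + v) := by
      have hG := Complex.Gamma_mul_Gamma_eq_betaIntegral
        (s := (u:ℂ)) (t := (v:ℂ)) (by simpa using hu) (by simpa using hv)
      have hne : Complex.Gamma ((u:ℂ) + v) ≠ 0 := by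
        rw [(by push_cast; ring : ((u:ℂ) + v) = ((u + v : ℝ) : ℂ)), Complex.Gamma_ofReal]
        exact_mod_cast (Real.Gamma_pos_of_pos (by linarith)).ne'
      rw [eq_div_iff hne]
      linear_combination hG.symm
    rw [hβ]
    rw [(by push_cast; ring : ((u:ℂ) + v) = ((u + v : ℝ) : ℂ)), Complex.Gamma_ofReal,
      Complex.Gamma_ofReal, Complex.Gamma_ofReal,
      (by push_cast; ring : (((u + v : ℝ) : ℂ)) - 1 = ((u + v - 1 : ℝ) : ℂ)),
      ← Complex.ofReal_cpow hT.le]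
    push_cast
    ring
  exact_mod_cast key

lemma dirichlet {a : ℝ} (ha : 0 < a) (m : ℕ) :
    ∀ {T : ℝ}, 0 < T →
      ∫⁻ s in simplexD m T, ∏ j, ENNReal.ofReal (s j ^ (a - 1))
        = ENNReal.ofReal (T ^ ((m : ℝ) * a) * Real.Gamma a ^ m /
            Real.Gamma ((m : ℝ) * a + 1)) := by
  induction m with
  | zero =>
    intro T hT
    have hset : simplexD 0 T = Set.univ := by
      ext s
      simp [simplexD, hT]
    rw [hset]
    simp [Real.Gamma_one, lintegral_const, MeasureTheory.volume_pi]
  | succ m ih =>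
    intro T hT
    set F : (Fin (m+1) → ℝ) → ℝ≥0∞ := fun s => ∏ j, ENNReal.ofReal (s j ^ (a - 1)) with hF
    have hFmeas : Measurable F := by
      apply Finset.measurable_prod
      intro j _
      exact ENNReal.measurable_ofReal.comp (by fun_prop)
    have hDmeas := measurableSet_simplexD (m+1) T
    set e := (MeasurableEquiv.piFinSuccAbove (fun _ : Fin (m+1) => ℝ) 0) with he
    have hmp := (volume_preserving_piFinSuccAbove (fun _ : Fin (m+1) => ℝ) 0).symm
    have hmem : ∀ (x : ℝ) (y : Fin m → ℝ),
        Fin.cons x y ∈ simplexD (m+1) T ↔ (0 < x ∧ y ∈ simplexD m (T - x)) := by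
      intro x y
      simp only [simplexD, Set.mem_setOf_eq, Fin.forall_fin_succ, Fin.cons_zero, Fin.cons_succ,
        Fin.sum_univ_succ]
      constructor
      · rintro ⟨⟨hx, hy⟩, hsum⟩; exact ⟨hx, hy, by linarith⟩
      · rintro ⟨hx, hy, hsum⟩; exact ⟨⟨hx, hy⟩, by linarith⟩
    have hgmeas : Measurable fun p : ℝ × (Fin m → ℝ) =>
        (simplexD (m+1) T).indicator F (e.symm p) :=
      (hFmeas.indicator hDmeas).comp e.symm.measurable
    have step1 : ∫⁻ s in simplexD (m+1) T, F s
        = ∫⁻ x : ℝ, ∫⁻ y : Fin m → ℝ,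
            (simplexD (m+1) T).indicator F (Fin.cons x y) := by
      rw [← lintegral_indicator hDmeas,
        ← hmp.lintegral_comp_emb e.symm.measurableEmbedding ((simplexD (m+1) T).indicator F),
        Measure.volume_eq_prod, lintegral_prod _ hgmeas.aemeasurable]
      apply lintegral_congr; intro x
      apply lintegral_congr; intro y
      congr 1
      simp [e, MeasurableEquiv.piFinSuccAbove_symm_apply, Fin.insertNth_zero,
        Fin.consEquiv]
    set K : ℝ := Real.Gamma a ^ m / Real.Gamma ((m : ℝ) * a + 1) with hK
    have step2 : ∀ x : ℝ, (∫⁻ y : Fin m → ℝ,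
          (simplexD (m+1) T).indicator F (Fin.cons x y)
          )
        = (Set.Ioo (0:ℝ) T).indicator
            (fun x => ENNReal.ofReal (x ^ (a-1)) *
              ENNReal.ofReal ((T - x) ^ ((m:ℝ) * a) * K)) x := by
      intro x
      have hcons : ∀ y : Fin m → ℝ, F (Fin.cons x y)
          = ENNReal.ofReal (x ^ (a-1)) * ∏ j, ENNReal.ofReal (y j ^ (a-1)) := by
        intro y
        rw [hF]
        simp [Fin.prod_univ_succ]
      by_cases hx : 0 < x
      · by_cases hxT : x < T
        · have hTx : 0 < T - x := by linarith
          have hind : ∀ y : Fin m → ℝ, (simplexD (m+1) T).indicator F (Fin.cons x y)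
              = ENNReal.ofReal (x ^ (a-1)) *
                (simplexD m (T - x)).indicator
                  (fun y => ∏ j, ENNReal.ofReal (y j ^ (a-1))) y := by
            intro y
            by_cases hy : y ∈ simplexD m (T - x)
            · rw [Set.indicator_of_mem ((hmem x y).2 ⟨hx, hy⟩), Set.indicator_of_mem hy, hcons]
            · rw [Set.indicator_of_notMem (fun hc => hy ((hmem x y).1 hc).2),
                Set.indicator_of_notMem hy, mul_zero]
          have hPmeas : Measurable fun y : Fin m → ℝ => ∏ j, ENNReal.ofReal (y j ^ (a-1)) :=
            Finset.measurable_prod _ fun j _ => ENNReal.measurable_ofReal.comp (by fun_prop)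
          simp_rw [hind]
          rw [lintegral_const_mul _ (hPmeas.indicator (measurableSet_simplexD m (T - x))),
            lintegral_indicator (measurableSet_simplexD m (T - x)), ih hTx,
            Set.indicator_of_mem (Set.mem_Ioo.2 ⟨hx, hxT⟩)]
          rw [hK, mul_div_assoc]
        · have hTx : T - x ≤ 0 := by linarith
          have hempty : simplexD m (T - x) = ∅ := simplexD_empty hTx
          have hind : ∀ y : Fin m → ℝ,
              (simplexD (m+1) T).indicator F (Fin.cons x y) = 0 := by
            intro y
            refine Set.indicator_of_notMem (fun hc => ?_) _
            have := ((hmem x y).1 hc).2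
            rw [hempty] at this
            exact this
          simp_rw [hind]
          rw [lintegral_zero, Set.indicator_of_notMem (by
            simp only [Set.mem_Ioo, not_and_or]; right; linarith)]
      · have hind : ∀ y : Fin m → ℝ,
            (simplexD (m+1) T).indicator F (Fin.cons x y) = 0 := by
          intro y
          exact Set.indicator_of_notMem (fun hc => hx ((hmem x y).1 hc).1) _
        simp_rw [hind]
        rw [lintegral_zero, Set.indicator_of_notMem (by
          simp only [Set.mem_Ioo, not_and_or]; left; linarith)]
    have hKpos : 0 < K := by
      rw [hK]
      exact div_pos (pow_pos (Real.Gamma_pos_of_pos ha) m)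
        (Real.Gamma_pos_of_pos (by positivity))
    have hGne : Real.Gamma ((m:ℝ) * a + 1) ≠ 0 :=
      (Real.Gamma_pos_of_pos (by positivity)).ne'
    have hGne2 : Real.Gamma (((m:ℝ) + 1) * a + 1) ≠ 0 :=
      (Real.Gamma_pos_of_pos (by positivity)).ne'
    rw [step1, lintegral_congr step2, lintegral_indicator measurableSet_Ioo]
    have h1 : ∀ᵐ x ∂(volume : Measure ℝ), x ∈ Set.Ioo (0:ℝ) T →
        ENNReal.ofReal (x ^ (a-1)) * ENNReal.ofReal ((T - x) ^ ((m:ℝ)*a) * K)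
          = ENNReal.ofReal (x ^ (a-1) * ((T-x) ^ ((m:ℝ)*a) * K)) := by
      refine Filter.Eventually.of_forall fun x hx => ?_
      rw [← ENNReal.ofReal_mul (Real.rpow_nonneg hx.1.le _)]
    rw [setLIntegral_congr_fun_ae measurableSet_Ioo h1]
    have hint : IntegrableOn (fun x => x ^ (a-1) * ((T - x) ^ ((m:ℝ)*a) * K))
        (Set.Ioo 0 T) := by
      have := (integrableOn_beta_kernel ha (by positivity : (0:ℝ) ≤ (m:ℝ)*a) hT).mul_const K
      simp only [mul_assoc] at this
      exact this
    have hnn : 0 ≤ᵐ[volume.restrict (Set.Ioo (0:ℝ) T)]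
        fun x => x ^ (a-1) * ((T - x) ^ ((m:ℝ)*a) * K) := by
      refine (ae_restrict_iff' measurableSet_Ioo).2 (Filter.Eventually.of_forall fun x hx => ?_)
      exact mul_nonneg (Real.rpow_nonneg hx.1.le _)
        (mul_nonneg (Real.rpow_nonneg (by linarith [hx.2]) _) hKpos.le)
    rw [← ofReal_integral_eq_lintegral_ofReal hint hnn]
    congr 1
    have hre : ∫ x in Set.Ioo (0:ℝ) T, x ^ (a-1) * ((T - x) ^ ((m:ℝ)*a) * K)
        = (∫ x in (0:ℝ)..T, x ^ (a-1) * (T - x) ^ (((m:ℝ)*a + 1) - 1)) * K := by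
      rw [intervalIntegral.integral_of_le hT.le, integral_Ioc_eq_integral_Ioo,
        ← integral_mul_const]
      refine setIntegral_congr_fun measurableSet_Ioo fun x hx => ?_
      rw [(by ring : ((m:ℝ)*a + 1) - 1 = (m:ℝ)*a)]
      ring
    rw [hre, realBeta a ((m:ℝ)*a + 1) ha (by positivity) hT, hK]
    have e1 : a + ((m:ℝ)*a+1) - 1 = ((m:ℝ)+1)*a := by ring
    have e2 : a + ((m:ℝ)*a+1) = ((m:ℝ)+1)*a + 1 := by ring
    rw [e1, e2]
    push_cast
    field_simp
    ring

lemma integrable_exp_neg_abs_rpow {p : ℝ} (hp : 1 ≤ p) :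
    Integrable (fun x : ℝ => Real.exp (-|x| ^ p)) := by
  have h1 : IntegrableOn (fun x : ℝ => Real.exp (-x ^ p)) (Set.Ioi 0) := by
    have := integrableOn_rpow_mul_exp_neg_rpow (s := 0) (by norm_num) (by linarith : (0:ℝ) < p)
    simpa using this
  have hIoi : IntegrableOn (fun x : ℝ => Real.exp (-|x| ^ p)) (Set.Ioi 0) := by
    refine h1.congr_fun (fun x hx => ?_) measurableSet_Ioi
    rw [abs_of_pos hx]
  have hIic : IntegrableOn (fun x : ℝ => Real.exp (-|x| ^ p)) (Set.Iic 0) := by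
    rw [← Measure.map_neg_eq_self (volume : Measure ℝ)]
    have hm : MeasurableEmbedding fun x : ℝ => -x :=
      (Homeomorph.neg ℝ).measurableEmbedding
    rw [hm.integrableOn_map_iff]
    simp only [Function.comp_def, abs_neg, Set.neg_preimage, Set.neg_Iic, neg_zero]
    exact (integrableOn_Ici_iff_integrableOn_Ioi).mpr hIoi
  have hu : IntegrableOn (fun x : ℝ => Real.exp (-|x| ^ p))
      (Set.Iic 0 ∪ Set.Ioi 0) := hIic.union hIoi
  rwa [Set.Iic_union_Ioi, integrableOn_univ] at hu

lemma exp_scaled_eq {p : ℝ} (hp0 : 0 < p) {s : ℝ} (hs : 0 < s) (x : ℝ) :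
    Real.exp (-|s ^ p⁻¹ * x| ^ p) = Real.exp (-(s * |x| ^ p)) := by
  have hc : (0:ℝ) < s ^ p⁻¹ := Real.rpow_pos_of_pos hs _
  rw [abs_mul, abs_of_pos hc, Real.mul_rpow hc.le (abs_nonneg x),
    Real.rpow_inv_rpow hs.le hp0.ne']

lemma integrable_exp_scaled {p : ℝ} (hp : 1 ≤ p) {s : ℝ} (hs : 0 < s) :
    Integrable (fun x : ℝ => Real.exp (-(s * |x| ^ p))) := by
  have hc : (0:ℝ) < s ^ p⁻¹ := Real.rpow_pos_of_pos hs _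
  have h := (integrable_exp_neg_abs_rpow hp).comp_mul_left' hc.ne'
  refine h.congr (Filter.Eventually.of_forall fun x => ?_)
  exact exp_scaled_eq (by linarith) hs x

lemma integral_exp_scaled {p : ℝ} (hp : 1 ≤ p) {s : ℝ} (hs : 0 < s) :
    ∫ x : ℝ, Real.exp (-(s * |x| ^ p))
      = s ^ (-p⁻¹) * ∫ x : ℝ, Real.exp (-|x| ^ p) := by
  have hc : (0:ℝ) < s ^ p⁻¹ := Real.rpow_pos_of_pos hs _
  have h := Measure.integral_comp_mul_left (fun y : ℝ => Real.exp (-|y| ^ p)) (s ^ p⁻¹)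
  simp_rw [exp_scaled_eq (by linarith : (0:ℝ) < p) hs] at h
  rw [h, smul_eq_mul, abs_of_pos (inv_pos.2 hc), ← Real.rpow_neg hs.le]

/-- The iterated integral of the (nonnegative) integrand is bounded by the stated constant;
in particular (since the right-hand side is a finite real number) it is finite. -/
theorem stmt_15 (T α₁ α₂ : ℝ) (hT : 0 < T)
    (h1 : α₁ ∈ Set.Ioc (0 : ℝ) 2) (h2 : α₂ ∈ Set.Ioc (0 : ℝ) 2) (hmax : 1 < max α₁ α₂)
    (m : ℕ) (hm : 1 ≤ m) :
    (∫⁻ s in simplexD m T, ∫⁻ v : Fin m → ℝ,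
        ENNReal.ofReal (Real.exp (-∑ j, (|v j| ^ α₁ + |v j| ^ α₂) * s j))) ≤
      ENNReal.ofReal
        (T ^ ((m : ℝ) * (1 - 1 / max α₁ α₂)) /
            Real.Gamma ((m : ℝ) * (1 - 1 / max α₁ α₂) + 1) *
          (Real.Gamma (1 - 1 / max α₁ α₂) * ∫ v : ℝ, Real.exp (-|v| ^ max α₁ α₂)) ^ m) := by
  set α : ℝ := max α₁ α₂ with hα
  have hα1 : 1 < α := hmax
  set a : ℝ := 1 - 1 / α with ha_def
  have ha : 0 < a := by
    rw [ha_def, sub_pos]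
    rw [div_lt_one (by linarith)]
    linarith
  have ha1 : a - 1 = -α⁻¹ := by rw [ha_def]; rw [one_div]; ring
  set I : ℝ := ∫ v : ℝ, Real.exp (-|v| ^ α) with hI
  have hgint : Integrable (fun x : ℝ => Real.exp (-|x| ^ α)) :=
    integrable_exp_neg_abs_rpow hα1.le
  have hInn : 0 ≤ I := integral_nonneg fun x => (Real.exp_pos _).le
  have hGa := Real.Gamma_pos_of_pos ha
  have hGma := Real.Gamma_pos_of_pos (show (0:ℝ) < (m:ℝ) * a + 1 by positivity)
  -- pointwise inequality |x|^α ≤ |x|^α₁ + |x|^α₂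
  have habs : ∀ x : ℝ, |x| ^ α ≤ |x| ^ α₁ + |x| ^ α₂ := by
    intro x
    rcases max_choice α₁ α₂ with h | h <;> rw [hα, h]
    · exact le_add_of_nonneg_right (Real.rpow_nonneg (abs_nonneg x) _)
    · exact le_add_of_nonneg_left (Real.rpow_nonneg (abs_nonneg x) _)
  -- inner integral bound
  have inner_bound : ∀ s : Fin m → ℝ, (∀ j, 0 < s j) →
      (∫⁻ v : Fin m → ℝ,
          ENNReal.ofReal (Real.exp (-∑ j, (|v j| ^ α₁ + |v j| ^ α₂) * s j)))
        ≤ ∏ j, ENNReal.ofReal (s j ^ (a - 1) * I) := by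
    intro s hs
    set f : Fin m → ℝ → ℝ := fun j x => Real.exp (-((|x| ^ α₁ + |x| ^ α₂) * s j)) with hf
    have hfle : ∀ j x, f j x ≤ Real.exp (-(s j * |x| ^ α)) := by
      intro j x
      rw [hf]
      apply Real.exp_le_exp.2
      rw [neg_le_neg_iff, mul_comm (s j)]
      exact mul_le_mul_of_nonneg_right (habs x) (hs j).le
    have hfint : ∀ j, Integrable (f j) := by
      intro j
      refine (integrable_exp_scaled hα1.le (hs j)).mono ?_ ?_
      · apply Measurable.aestronglyMeasurable
        fun_prop
      · refine Filter.Eventually.of_forall fun x => ?_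
        rw [Real.norm_eq_abs, Real.norm_eq_abs, abs_of_pos (Real.exp_pos _),
          abs_of_pos (Real.exp_pos _)]
        exact hfle j x
    have hprod : ∀ v : Fin m → ℝ,
        Real.exp (-∑ j, (|v j| ^ α₁ + |v j| ^ α₂) * s j) = ∏ j, f j (v j) := by
      intro v
      rw [← Finset.sum_neg_distrib, Real.exp_sum]
    simp_rw [hprod]
    have hint : Integrable fun v : Fin m → ℝ => ∏ j, f j (v j) :=
      Integrable.fintype_prod hfint
    rw [← ofReal_integral_eq_lintegral_ofReal hint
      (Filter.Eventually.of_forall fun v => Finset.prod_nonneg fun j _ => (Real.exp_pos _).le)]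
    rw [MeasureTheory.integral_fin_nat_prod_volume_eq_prod f]
    rw [← ENNReal.ofReal_prod_of_nonneg
      (fun j _ => mul_nonneg (Real.rpow_nonneg (hs j).le (a-1)) hInn)]
    apply ENNReal.ofReal_le_ofReal
    refine Finset.prod_le_prod (fun j _ => integral_nonneg fun x => (Real.exp_pos _).le)
      (fun j _ => ?_)
    calc ∫ x, f j x ≤ ∫ x, Real.exp (-(s j * |x| ^ α)) :=
        integral_mono (hfint j) (integrable_exp_scaled hα1.le (hs j)) (hfle j)
      _ = (s j) ^ (-α⁻¹) * I := integral_exp_scaled hα1.le (hs j)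
      _ = s j ^ (a - 1) * I := by rw [ha1]
  -- main chain
  have hPmeas : Measurable fun s : Fin m → ℝ => ∏ j, ENNReal.ofReal (s j ^ (a-1)) :=
    Finset.measurable_prod _ fun j _ => ENNReal.measurable_ofReal.comp (by fun_prop)
  calc (∫⁻ s in simplexD m T, ∫⁻ v : Fin m → ℝ,
        ENNReal.ofReal (Real.exp (-∑ j, (|v j| ^ α₁ + |v j| ^ α₂) * s j)))
      ≤ ∫⁻ s in simplexD m T,
          (∏ j, ENNReal.ofReal (s j ^ (a-1))) * ENNReal.ofReal I ^ m := by
        refine setLIntegral_mono' (measurableSet_simplexD m T) fun s hs => ?_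
        refine (inner_bound s hs.1).trans_eq ?_
        calc ∏ j, ENNReal.ofReal (s j ^ (a - 1) * I)
            = ∏ j, (ENNReal.ofReal (s j ^ (a - 1)) * ENNReal.ofReal I) := by
              refine Finset.prod_congr rfl fun j _ => ?_
              rw [ENNReal.ofReal_mul (Real.rpow_nonneg (hs.1 j).le _)]
          _ = (∏ j, ENNReal.ofReal (s j ^ (a-1))) * ENNReal.ofReal I ^ m := by
              rw [Finset.prod_mul_distrib, Finset.prod_const, Finset.card_univ,
                Fintype.card_fin]
    _ = (∫⁻ s in simplexD m T, ∏ j, ENNReal.ofReal (s j ^ (a-1)))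
          * ENNReal.ofReal I ^ m := by
        rw [lintegral_mul_const _ hPmeas]
    _ = ENNReal.ofReal (T ^ ((m:ℝ) * a) * Real.Gamma a ^ m / Real.Gamma ((m:ℝ) * a + 1))
          * ENNReal.ofReal I ^ m := by
        rw [dirichlet ha m hT]
    _ = ENNReal.ofReal
          (T ^ ((m : ℝ) * a) / Real.Gamma ((m : ℝ) * a + 1) * (Real.Gamma a * I) ^ m) := by
        rw [← ENNReal.ofReal_pow hInn, ← ENNReal.ofReal_mul
          (by positivity : (0:ℝ) ≤ T ^ ((m:ℝ) * a) * Real.Gamma a ^ m /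
            Real.Gamma ((m:ℝ) * a + 1))]
        congr 1
        rw [mul_pow]
        field_simp
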